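/- Let A = F_2[x,u,t]/(x^{n+1}, u^2, t x^n, u x^n) with n even, and let Δ: A → A be F_2-linear with Δ(x) = Δ(u) = Δ(t) = 0, satisfying Δ(ab) = Δ(a)b + aΔ(b) + [a,b], where [·,·] is a symmetric biderivation with [x,u] = x, [x,t] = 0, [u,t] = t, and [x,x] = [u,u] = [t,t] = 0. Then Δ(x^a u^b t^c) = (a+c)·b·x^a t^c (mod 2). -/
import Mathlib


/-- In `A = F₂[x,u,t]/(x^{n+1}, u², tx^n, ux^n)` with `n` even, a BV operator Δ vanishing
on generators, and bracket a symmetric biderivation with `[x,u]=x`, `[x,t]=0`, `[u,t]=t`,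
one has `Δ(xᵃuᵇt^c) = (a+c)b·xᵃt^c` (mod 2). -/
theorem stmt5 (A : Type*) [CommRing A] (hchar : (2 : A) = 0)
    (n : ℕ) (hn : Even n) (hn0 : 0 < n)
    (x u t : A) (hxn : x ^ (n + 1) = 0) (hu2 : u ^ 2 = 0)
    (htx : t * x ^ n = 0) (hux : u * x ^ n = 0)
    (Δ : A → A) (hΔadd : ∀ a b : A, Δ (a + b) = Δ a + Δ b)
    (br : A → A → A)
    (hsymm : ∀ a b : A, br a b = br b a)
    (haddr : ∀ a b c : A, br a (b + c) = br a b + br a c)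
    (hleib : ∀ a b c : A, br a (b * c) = br a b * c + br a c * b)
    (hBV : ∀ a b : A, Δ (a * b) = Δ a * b + a * Δ b + br a b)
    (hΔx : Δ x = 0) (hΔu : Δ u = 0) (hΔt : Δ t = 0)
    (hxu : br x u = x) (hxt : br x t = 0) (hut : br u t = t)
    (hxx : br x x = 0) (huu : br u u = 0) (htt : br t t = 0) :
    ∀ a b c : ℕ, a ≤ n → b ≤ 1 →
      Δ (x ^ a * u ^ b * t ^ c) = ((a + c) * b) • (x ^ a * t ^ c) := by

  have hone : ∀ g : A, br g 1 = 0 := by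
    intro g
    have h := hleib g 1 1
    rw [mul_one, mul_one] at h
    linear_combination -h
  have hpow0 : ∀ (g h : A), br g h = 0 → ∀ k : ℕ, br g (h ^ k) = 0 := by
    intro g h hgh k
    induction k with
    | zero => simpa using hone g
    | succ m ih =>
      have := hleib g h (h ^ m)
      rw [pow_succ, mul_comm (h ^ m) h]
      rw [this, hgh, ih]; ring
  have hpow1 : ∀ (g h : A), br g h = h → ∀ k : ℕ, br g (h ^ k) = k • h ^ k := by
    intro g h hgh k
    induction k with
    | zero => simpa using hone g
    | succ m ih =>
      have := hleib g h (h ^ m)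
      rw [pow_succ, mul_comm (h ^ m) h]
      rw [this, hgh, ih]
      simp [nsmul_eq_mul, pow_succ]
      ring
  have hΔ1 : Δ 1 = 0 := by
    have h := hBV 1 1
    rw [hone, mul_one, mul_one, one_mul] at h
    linear_combination -h
  have hΔpow : ∀ (g : A), Δ g = 0 → br g g = 0 → ∀ k : ℕ, Δ (g ^ k) = 0 := by
    intro g hg hgg k
    induction k with
    | zero => simpa using hΔ1
    | succ m ih =>
      rw [pow_succ, mul_comm (g ^ m) g, hBV, hg, ih, hpow0 g g hgg]
      ring
  have hΔxp : ∀ a : ℕ, Δ (x ^ a) = 0 := hΔpow x hΔx hxx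
  have hΔtp : ∀ c : ℕ, Δ (t ^ c) = 0 := hΔpow t hΔt htt
  have hbrxt : ∀ a c : ℕ, br (x ^ a) (t ^ c) = 0 := by
    intro a c
    have h1 : br (t ^ c) x = 0 := by rw [hsymm]; exact hpow0 x t hxt c
    rw [hsymm]; exact hpow0 (t ^ c) x h1 a
  have hΔxtc : ∀ a c : ℕ, Δ (x ^ a * t ^ c) = 0 := by
    intro a c
    rw [hBV, hΔxp, hΔtp, hbrxt]; ring
  intro a b c ha hb
  interval_cases b
  · simp only [pow_zero, mul_one, Nat.mul_zero, zero_smul]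
    exact hΔxtc a c
  · simp only [pow_one, Nat.mul_one]
    have hxau : Δ (x ^ a * u) = a • (x ^ a) := by
      rw [hBV, hΔxp, hΔu, hsymm]
      have hux' : br u x = x := by rw [hsymm]; exact hxu
      have := hpow1 u x hux' a
      rw [this]; ring
    have hbrt : br (x ^ a * u) (t ^ c) = c • (x ^ a * t ^ c) := by
      rw [hsymm, hleib, hsymm (t ^ c) (x ^ a), hbrxt]
      have h1 : br (t ^ c) u = c • t ^ c := by
        rw [hsymm]; exact hpow1 u t hut c
      rw [h1]
      simp [nsmul_eq_mul]; ring
    calc Δ (x ^ a * u * t ^ c)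
        = Δ (x ^ a * u) * t ^ c + (x ^ a * u) * Δ (t ^ c) + br (x ^ a * u) (t ^ c) := hBV _ _
      _ = (a + c) • (x ^ a * t ^ c) := by
          rw [hxau, hΔtp, hbrt]
          simp [nsmul_eq_mul]; ring
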